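/- Let X be a right A-Galois object. With σ'_X(x) := δ_X·σ_X(x)·δ_X⁻¹ the modular automorphism of ψ_X, the following hold: (i) α ∘ σ'_X = (σ'_X ⊗ S⁻²) ∘ α; (ii) for all a ∈ A, β(S⁻¹(σ(a))) = (σ_X ⊗ id)(Σ(β(a))), where Σ is the flip map on X ⊗ X; in Sweedler-type notation, (S⁻¹σ(a))^[1] ⊗ (S⁻¹σ(a))^[2] = σ_X(a^[2]) ⊗ a^[1]. -/

import Mathlib

open TensorProduct

noncomputable section

variable (k : Type*) [Field k]

/-- Apply a linear functional to the second tensor factor. -/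
def applySnd {M N : Type*} [AddCommGroup M] [Module k M]
    [AddCommGroup N] [Module k N] (f : N →ₗ[k] k) : M ⊗[k] N →ₗ[k] M :=
  (TensorProduct.rid k M).toLinearMap ∘ₗ LinearMap.lTensor M f

/-- Apply a linear functional to the first tensor factor. -/
def applyFst {M N : Type*} [AddCommGroup M] [Module k M]
    [AddCommGroup N] [Module k N] (f : M →ₗ[k] k) : M ⊗[k] N →ₗ[k] N :=
  (TensorProduct.lid k N).toLinearMap ∘ₗ LinearMap.rTensor N f

variable (A X : Type*) [Ring A] [HopfAlgebra k A] [Ring X] [Algebra k X]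

/-- The Galois map `V : X ⊗ X → X ⊗ A`, `x ⊗ y ↦ (x ⊗ 1) * α y`. -/
def galoisV (α : X →ₐ[k] X ⊗[k] A) : X ⊗[k] X →ₗ[k] X ⊗[k] A :=
  LinearMap.mul' k (X ⊗[k] A) ∘ₗ
    TensorProduct.map ((TensorProduct.mk k X A).flip 1) α.toLinearMap

/-- A Hopf algebra with bijective antipode and faithful left integral `φ`,
together with a right Galois coaction `α` on `X` with trivial coinvariants. -/
structure GaloisContext where
  φ : A →ₗ[k] k
  φ_ne : φ ≠ 0
  φ_integral : ∀ a : A, applySnd k φ (Coalgebra.comul a) = φ a • (1 : A)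
  φ_faithful_left : ∀ a : A, (∀ b : A, φ (a * b) = 0) → a = 0
  φ_faithful_right : ∀ a : A, (∀ b : A, φ (b * a) = 0) → a = 0
  antipode_bijective : Function.Bijective (HopfAlgebra.antipode (R := k) (A := A))
  α : X →ₐ[k] X ⊗[k] A
  coassoc : ∀ x : X,
    TensorProduct.assoc k X A A ((LinearMap.rTensor A α.toLinearMap) (α x))
      = LinearMap.lTensor X (Coalgebra.comul (R := k) (A := A)) (α x)
  counit_id : ∀ x : X,
    applySnd k (Coalgebra.counit (R := k) (A := A)) (α x) = x
  coinv_trivial : ∀ x : X, α x = x ⊗ₜ[k] (1 : A) → ∃ c : k, x = c • (1 : X)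
  galois : Function.Bijective (galoisV k A X α)

variable {k A X}

/-- The Galois map as a linear equivalence. -/
def GaloisContext.V (G : GaloisContext k A X) : (X ⊗[k] X) ≃ₗ[k] (X ⊗[k] A) :=
  LinearEquiv.ofBijective (galoisV k A X G.α) G.galois

/-- The map `β : A → X ⊗ X`, `a ↦ V⁻¹(1 ⊗ a)`. -/
def GaloisContext.β (G : GaloisContext k A X) : A →ₗ[k] X ⊗[k] X :=
  G.V.symm.toLinearMap ∘ₗ TensorProduct.mk k X A 1

end

/-! ### Auxiliary development -/

set_option synthInstance.maxHeartbeats 400000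
set_option maxHeartbeats 1600000

noncomputable section Aux

open TensorProduct LinearMap

variable {k : Type*} [Field k]

section Modules

variable {M N P Q : Type*} [AddCommGroup M] [Module k M] [AddCommGroup N] [Module k N]
  [AddCommGroup P] [Module k P] [AddCommGroup Q] [Module k Q]

@[simp] lemma applySnd_tmul (f : N →ₗ[k] k) (m : M) (n : N) :
    applySnd k f (m ⊗ₜ[k] n) = f n • m := by
  simp [applySnd]

@[simp] lemma applyFst_tmul (f : M →ₗ[k] k) (m : M) (n : N) :
    applyFst k f (m ⊗ₜ[k] n) = f m • n := by
  simp [applyFst]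

lemma applySnd_zero_fun (w : M ⊗[k] N) : applySnd k (0 : N →ₗ[k] k) w = 0 := by
  simp [applySnd]

lemma applyFst_comm_applySnd (f : M →ₗ[k] k) (g : N →ₗ[k] k) (w : M ⊗[k] N) :
    f (applySnd k g w) = g (applyFst k f w) := by
  induction w using TensorProduct.induction_on with
  | zero => simp
  | tmul m n => simp [mul_comm]
  | add x y hx hy => simp [hx, hy]

lemma applyFst_map (f : P →ₗ[k] k) (g : M →ₗ[k] P) (h : N →ₗ[k] Q) (w : M ⊗[k] N) :
    applyFst k f (TensorProduct.map g h w) = h (applyFst k (f ∘ₗ g) w) := by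
  induction w using TensorProduct.induction_on with
  | zero => simp
  | tmul m n => simp
  | add x y hx hy => simp [hx, hy, map_add]

lemma applySnd_map_id (f : Q →ₗ[k] k) (h : N →ₗ[k] Q) (w : M ⊗[k] N) :
    applySnd k f (TensorProduct.map LinearMap.id h w) = applySnd k (f ∘ₗ h) w := by
  induction w using TensorProduct.induction_on with
  | zero => simp
  | tmul m n => simp
  | add x y hx hy => simp [hx, hy, map_add]

lemma applyFst_comm (f : N →ₗ[k] k) (w : M ⊗[k] N) :
    applyFst k f ((TensorProduct.comm k M N) w) = applySnd k f w := by
  induction w using TensorProduct.induction_on with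
  | zero => simp
  | tmul m n => simp
  | add x y hx hy => simp [hx, hy]

/-- Permutation of the last two tensor factors. -/
def swap23 (M N P : Type*) [AddCommGroup M] [Module k M] [AddCommGroup N] [Module k N]
    [AddCommGroup P] [Module k P] :
    ((M ⊗[k] N) ⊗[k] P) ≃ₗ[k] ((M ⊗[k] P) ⊗[k] N) :=
  (TensorProduct.assoc k M N P) ≪≫ₗ
    (TensorProduct.congr (LinearEquiv.refl k M) (TensorProduct.comm k N P)) ≪≫ₗ
    (TensorProduct.assoc k M P N).symm

@[simp] lemma swap23_tmul (m : M) (n : N) (p : P) :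
    swap23 M N P ((m ⊗ₜ[k] n) ⊗ₜ[k] p) = (m ⊗ₜ[k] p) ⊗ₜ[k] n := by
  simp [swap23]

end Modules

section Sep

variable {M N : Type*} [AddCommGroup M] [Module k M] [AddCommGroup N] [Module k N]

lemma repr_tensor_eq (cB : Module.Basis ι k M) (cC : Module.Basis κ k N) (i : ι) (j : κ) (w : M ⊗[k] N) :
    ((cB.tensorProduct cC).repr w) (i, j) = cB.repr (applySnd k (cC.coord j) w) i := by
  induction w using TensorProduct.induction_on with
  | zero => simp
  | tmul m n =>
      simp [Module.Basis.tensorProduct_repr_tmul_apply, Module.Basis.coord_apply, mul_comm]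
  | add x y hx hy => simp [hx, hy]

lemma sep_snd_coord (cB : Module.Basis ι k M) (cC : Module.Basis κ k N) (w : M ⊗[k] N)
    (h : ∀ j, applySnd k (cC.coord j) w = 0) : w = 0 := by
  have : (cB.tensorProduct cC).repr w = 0 := by
    ext p
    obtain ⟨i, j⟩ := p
    rw [repr_tensor_eq cB cC i j w, h j]
    simp
  exact (LinearEquiv.map_eq_zero_iff _).mp this

lemma sep_fst_fam {ι' : Type*} (f : ι' → (M →ₗ[k] k))
    (hf : ∀ u : M, (∀ i, f i u = 0) → u = 0) (w : M ⊗[k] N)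
    (h : ∀ i, applyFst k (f i) w = 0) : w = 0 := by
  apply sep_snd_coord (Module.Basis.ofVectorSpace k M) (Module.Basis.ofVectorSpace k N) w
  intro j
  apply hf
  intro i
  rw [applyFst_comm_applySnd (f i) ((Module.Basis.ofVectorSpace k N).coord j) w, h i]
  simp

lemma sep_all_dual (w : M ⊗[k] N) (h : ∀ ω : Module.Dual k M, applyFst k ω w = 0) : w = 0 :=
  sep_fst_fam (fun ω : Module.Dual k M => ω)
    (fun u hu => (Module.forall_dual_apply_eq_zero_iff k u).mp hu) w h

end Sep

section Algebras

variable {B C : Type*} [Ring B] [Algebra k B] [Ring C] [Algebra k C]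

lemma applySnd_mul_tmul (f : C →ₗ[k] k) (w : B ⊗[k] C) (b : B) (c : C) :
    applySnd k f (w * (b ⊗ₜ[k] c)) = applySnd k (f ∘ₗ mulRight k c) w * b := by
  induction w using TensorProduct.induction_on with
  | zero => simp
  | tmul p q => simp [Algebra.TensorProduct.tmul_mul_tmul, smul_mul_assoc]
  | add x y hx hy => simp [add_mul, hx, hy]

lemma applySnd_tmul_mul (f : C →ₗ[k] k) (b : B) (c : C) (w : B ⊗[k] C) :
    applySnd k f ((b ⊗ₜ[k] c) * w) = b * applySnd k (f ∘ₗ mulLeft k c) w := by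
  induction w using TensorProduct.induction_on with
  | zero => simp
  | tmul p q => simp [Algebra.TensorProduct.tmul_mul_tmul, mul_smul_comm]
  | add x y hx hy => simp [mul_add, hx, hy]

lemma applyFst_mul_tmul (f : B →ₗ[k] k) (w : B ⊗[k] C) (b : B) (c : C) :
    applyFst k f (w * (b ⊗ₜ[k] c)) = applyFst k (f ∘ₗ mulRight k b) w * c := by
  induction w using TensorProduct.induction_on with
  | zero => simp
  | tmul p q => simp [Algebra.TensorProduct.tmul_mul_tmul, smul_mul_assoc]
  | add x y hx hy => simp [add_mul, hx, hy]

lemma applyFst_tmul_mul (f : B →ₗ[k] k) (b : B) (c : C) (w : B ⊗[k] C) :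
    applyFst k f ((b ⊗ₜ[k] c) * w) = c * applyFst k (f ∘ₗ mulLeft k b) w := by
  induction w using TensorProduct.induction_on with
  | zero => simp
  | tmul p q => simp [Algebra.TensorProduct.tmul_mul_tmul, mul_smul_comm]
  | add x y hx hy => simp [mul_add, hx, hy]

end Algebras

section Hopf

variable {A : Type*} [Ring A] [HopfAlgebra k A]

local notation "aS" => (HopfAlgebra.antipode (R := k) (A := A))
local notation "Δ" => (Coalgebra.comul (R := k) (A := A))
local notation "ε" => (Coalgebra.counit (R := k) (A := A))

lemma applySnd_counit_comul (a : A) : applySnd k ε (Δ a) = a := by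
  simp [applySnd]

/-- `T2 (c ⊗ b) = (b ⊗ 1) * comul c`. -/
def T2map (k A : Type*) [Field k] [Ring A] [HopfAlgebra k A] : A ⊗[k] A →ₗ[k] A ⊗[k] A :=
  LinearMap.mul' k (A ⊗[k] A) ∘ₗ
    TensorProduct.map ((TensorProduct.mk k A A).flip 1) Coalgebra.comul ∘ₗ
    (TensorProduct.comm k A A).toLinearMap

@[simp] lemma T2map_tmul (c b : A) :
    T2map k A (c ⊗ₜ[k] b) = (b ⊗ₜ[k] (1 : A)) * Δ c := by
  simp [T2map]

/-- Left inverse of `T2map`: `U (p ⊗ q) = q₂ ⊗ p * S q₁`. -/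
def Umap (k A : Type*) [Field k] [Ring A] [HopfAlgebra k A] : A ⊗[k] A →ₗ[k] A ⊗[k] A :=
  (TensorProduct.comm k A A).toLinearMap ∘ₗ
    LinearMap.rTensor A (LinearMap.mul' k A ∘ₗ LinearMap.lTensor A (HopfAlgebra.antipode k)) ∘ₗ
    (TensorProduct.assoc k A A A).symm.toLinearMap ∘ₗ
    LinearMap.lTensor A Coalgebra.comul

lemma Umap_one_mul (b : A) (w : A ⊗[k] A) :
    Umap k A ((b ⊗ₜ[k] (1 : A)) * w) = ((1 : A) ⊗ₜ[k] b) * Umap k A w := by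
  induction w using TensorProduct.induction_on with
  | zero => simp
  | tmul p q =>
      have key : ∀ t : A ⊗[k] A, ∀ p' : A,
          (TensorProduct.comm k A A)
            (LinearMap.rTensor A (LinearMap.mul' k A ∘ₗ LinearMap.lTensor A (HopfAlgebra.antipode k))
              ((TensorProduct.assoc k A A A).symm ((b * p') ⊗ₜ[k] t)))
          = ((1 : A) ⊗ₜ[k] b) *
            (TensorProduct.comm k A A)
              (LinearMap.rTensor A (LinearMap.mul' k A ∘ₗ LinearMap.lTensor A (HopfAlgebra.antipode k))
                ((TensorProduct.assoc k A A A).symm (p' ⊗ₜ[k] t))) := by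
        intro t p'
        induction t using TensorProduct.induction_on with
        | zero => simp only [tmul_zero, map_zero, mul_zero]
        | tmul u v =>
            simp [Algebra.TensorProduct.tmul_mul_tmul, mul_assoc]
        | add x y hx hy => simp [tmul_add, mul_add, hx, hy]
      simpa [Umap, Algebra.TensorProduct.tmul_mul_tmul] using key (Δ q) p
  | add x y hx hy => simp [mul_add, hx, hy]

lemma Umap_comul (c : A) : Umap k A (Δ c) = c ⊗ₜ[k] (1 : A) := by
  have h1 : (TensorProduct.assoc k A A A).symm
      (LinearMap.lTensor A Coalgebra.comul (Δ c))
      = LinearMap.rTensor A Coalgebra.comul (Δ c) :=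
    Coalgebra.coassoc_symm_apply c
  simp only [Umap, LinearMap.coe_comp, Function.comp_apply, LinearEquiv.coe_coe]
  rw [h1, ← LinearMap.rTensor_comp_apply, LinearMap.comp_assoc,
    HopfAlgebra.mul_antipode_lTensor_comul, LinearMap.rTensor_comp_apply,
    Coalgebra.rTensor_counit_comul]
  simp

lemma Umap_T2map (t : A ⊗[k] A) : Umap k A (T2map k A t) = t := by
  induction t using TensorProduct.induction_on with
  | zero => simp
  | tmul c b =>
      rw [T2map_tmul, Umap_one_mul, Umap_comul]
      simp [Algebra.TensorProduct.tmul_mul_tmul]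
  | add x y hx hy => simp [hx, hy]

lemma H3_comul (a : A) :
    T2map k A ((TensorProduct.comm k A A) (LinearMap.rTensor A (HopfAlgebra.antipode k) (Δ a)))
      = (1 : A) ⊗ₜ[k] a := by
  -- step 1: rewrite as `mul' ∘ map (g ∘ S) comul` applied to `comul a`
  have h0 : ∀ t : A ⊗[k] A,
      T2map k A ((TensorProduct.comm k A A) (LinearMap.rTensor A (HopfAlgebra.antipode k) t))
        = LinearMap.mul' k (A ⊗[k] A)
            (TensorProduct.map (((TensorProduct.mk k A A).flip 1) ∘ₗ (HopfAlgebra.antipode k))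
              Coalgebra.comul t) := by
    intro t
    induction t using TensorProduct.induction_on with
    | zero => simp
    | tmul b c => simp
    | add x y hx hy => simp [hx, hy]
  rw [h0]
  -- step 2: `map u v = rTensor u ∘ lTensor v`
  have h1 : ∀ t : A ⊗[k] A,
      TensorProduct.map (((TensorProduct.mk k A A).flip 1) ∘ₗ (HopfAlgebra.antipode k))
          (Coalgebra.comul (R := k) (A := A)) t
        = LinearMap.rTensor (A ⊗[k] A)
            (((TensorProduct.mk k A A).flip 1) ∘ₗ (HopfAlgebra.antipode k))
            (LinearMap.lTensor A Coalgebra.comul t) := by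
    intro t
    induction t using TensorProduct.induction_on with
    | zero => simp
    | tmul b c => simp
    | add x y hx hy => simp [hx, hy]
  rw [h1]
  -- step 3: coassociativity
  have h2 : LinearMap.lTensor A (Coalgebra.comul (R := k) (A := A)) (Δ a)
      = (TensorProduct.assoc k A A A) (LinearMap.rTensor A Coalgebra.comul (Δ a)) :=
    (Coalgebra.coassoc_apply a).symm
  rw [h2]
  -- step 4: the general identity on `(A ⊗ A) ⊗ A`
  have h5 : ∀ t : (A ⊗[k] A) ⊗[k] A,
      LinearMap.mul' k (A ⊗[k] A)
          (LinearMap.rTensor (A ⊗[k] A)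
            (((TensorProduct.mk k A A).flip 1) ∘ₗ (HopfAlgebra.antipode k))
            ((TensorProduct.assoc k A A A) t))
        = LinearMap.rTensor A (LinearMap.mul' k A ∘ₗ LinearMap.rTensor A (HopfAlgebra.antipode k))
            t := by
    intro t
    induction t using TensorProduct.induction_on with
    | zero => simp
    | tmul w r =>
        induction w using TensorProduct.induction_on with
        | zero => simp only [zero_tmul, map_zero]
        | tmul p q => simp [Algebra.TensorProduct.tmul_mul_tmul]
        | add x y hx hy => simp [add_tmul, hx, hy]
    | add x y hx hy => simp [hx, hy]
  rw [h5, ← LinearMap.rTensor_comp_apply, LinearMap.comp_assoc,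
    HopfAlgebra.mul_antipode_rTensor_comul, LinearMap.rTensor_comp_apply,
    Coalgebra.rTensor_counit_comul]
  simp

end Hopf

section Galois

variable {A X : Type*} [Ring A] [HopfAlgebra k A] [Ring X] [Algebra k X]

lemma V_tmul (G : GaloisContext k A X) (x y : X) :
    G.V (x ⊗ₜ[k] y) = (x ⊗ₜ[k] (1 : A)) * G.α y := by
  simp [GaloisContext.V, galoisV]

lemma V_beta (G : GaloisContext k A X) (a : A) :
    G.V (G.β a) = (1 : X) ⊗ₜ[k] a := by
  simp [GaloisContext.β]

lemma V_map_mulLeft (G : GaloisContext k A X) (z : X) (u : X ⊗[k] X) :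
    G.V (TensorProduct.map (mulLeft k z) LinearMap.id u) = (z ⊗ₜ[k] (1 : A)) * G.V u := by
  induction u using TensorProduct.induction_on with
  | zero => simp
  | tmul p q =>
      simp only [map_tmul, mulLeft_apply, LinearMap.id_coe, id_eq, V_tmul, ← mul_assoc,
        Algebra.TensorProduct.tmul_mul_tmul, one_mul, mul_one]
  | add x y hx hy => simp [hx, hy, mul_add]

lemma V_symm_tmul (G : GaloisContext k A X) (z : X) (a : A) :
    G.V.symm (z ⊗ₜ[k] a) = TensorProduct.map (mulLeft k z) LinearMap.id (G.β a) := by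
  rw [LinearEquiv.symm_apply_eq, V_map_mulLeft, V_beta,
    Algebra.TensorProduct.tmul_mul_tmul, mul_one, one_mul]

lemma V_map_mulRight (G : GaloisContext k A X) (x : X) (u : X ⊗[k] X) :
    G.V (TensorProduct.map LinearMap.id (mulRight k x) u) = G.V u * G.α x := by
  induction u using TensorProduct.induction_on with
  | zero => simp
  | tmul p q =>
      simp only [map_tmul, mulRight_apply, LinearMap.id_coe, id_eq, V_tmul, map_mul, mul_assoc]
  | add x y hx hy => simp [hx, hy, add_mul]

lemma beta_mulRight (G : GaloisContext k A X) (x : X) (a : A) :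
    TensorProduct.map LinearMap.id (mulRight k x) (G.β a)
      = G.V.symm (((1 : X) ⊗ₜ[k] a) * G.α x) := by
  rw [eq_comm, LinearEquiv.symm_apply_eq, V_map_mulRight, V_beta]

lemma applySnd_phi_V (G : GaloisContext k A X) (φX : X →ₗ[k] k)
    (hφX : ∀ x : X, applySnd k G.φ (G.α x) = φX x • (1 : X)) (u : X ⊗[k] X) :
    applySnd k G.φ (G.V u) = applySnd k φX u := by
  induction u using TensorProduct.induction_on with
  | zero => simp
  | tmul x y =>
      rw [V_tmul, applySnd_tmul_mul, mulLeft_one, LinearMap.comp_id, hφX,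
        mul_smul_comm, mul_one, applySnd_tmul]
  | add x y hx hy => simp [hx, hy]

lemma mul_beta (G : GaloisContext k A X) (a : A) :
    mul' k X (G.β a) = Coalgebra.counit (R := k) a • (1 : X) := by
  have key : ∀ u : X ⊗[k] X,
      applySnd k (Coalgebra.counit (R := k) (A := A)) (G.V u) = mul' k X u := by
    intro u
    induction u using TensorProduct.induction_on with
    | zero => simp
    | tmul x y =>
        rw [V_tmul, applySnd_tmul_mul, mulLeft_one, LinearMap.comp_id, G.counit_id,
          mul'_apply]
    | add x y hx hy => simp [hx, hy]
  have h := key (G.β a)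
  rw [V_beta, applySnd_tmul] at h
  exact h.symm

lemma rT_alpha_mul (G : GaloisContext k A X) (w w' : X ⊗[k] A) :
    rTensor A G.α.toLinearMap (w * w')
      = rTensor A G.α.toLinearMap w * rTensor A G.α.toLinearMap w' := by
  have h : rTensor A G.α.toLinearMap
      = (Algebra.TensorProduct.map G.α (AlgHom.id k A)).toLinearMap := by
    apply TensorProduct.ext'
    intro x a
    simp
  rw [h]
  simp only [AlgHom.toLinearMap_apply]
  exact map_mul _ _ _

lemma lT_comul_mul (w w' : X ⊗[k] A) :
    lTensor X (Coalgebra.comul (R := k) (A := A)) (w * w')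
      = lTensor X (Coalgebra.comul (R := k) (A := A)) w *
        lTensor X (Coalgebra.comul (R := k) (A := A)) w' := by
  have h : lTensor X (Coalgebra.comul (R := k) (A := A))
      = (Algebra.TensorProduct.map (AlgHom.id k X) (Bialgebra.comulAlgHom k A)).toLinearMap := by
    apply TensorProduct.ext'
    intro x a
    simp [Bialgebra.comulAlgHom_apply]
  rw [h]
  simp only [AlgHom.toLinearMap_apply]
  exact map_mul _ _ _

lemma assoc_mul (u v : (X ⊗[k] A) ⊗[k] A) :
    (TensorProduct.assoc k X A A) (u * v)
      = (TensorProduct.assoc k X A A) u * (TensorProduct.assoc k X A A) v := by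
  have h : ∀ w : (X ⊗[k] A) ⊗[k] A,
      (TensorProduct.assoc k X A A) w = (Algebra.TensorProduct.assoc k k k X A A) w := by
    intro w
    rfl
  rw [h, h, h, map_mul]

/-- `Rmap (b ⊗ c) = (c⁽¹⁾ ⊗ S b) ⊗ c⁽²⁾`. -/
def RmapG (G : GaloisContext k A X) : A ⊗[k] A →ₗ[k] (X ⊗[k] A) ⊗[k] X :=
  rTensor X (TensorProduct.comm k A X).toLinearMap ∘ₗ
    (TensorProduct.assoc k A X X).symm.toLinearMap ∘ₗ
    TensorProduct.map (HopfAlgebra.antipode k) G.β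

/-- The injectivity gadget. -/
def QeG (G : GaloisContext k A X) : ((X ⊗[k] A) ⊗[k] X) ≃ₗ[k] X ⊗[k] (A ⊗[k] A) :=
  (swap23 X A X) ≪≫ₗ (TensorProduct.congr G.V (LinearEquiv.refl k A)) ≪≫ₗ
    (TensorProduct.assoc k X A A)

def PhiMapG (G : GaloisContext k A X) : ((X ⊗[k] A) ⊗[k] X) →ₗ[k] X ⊗[k] (A ⊗[k] A) :=
  lTensor X (T2map k A) ∘ₗ (QeG G).toLinearMap

lemma C0 (w : X ⊗[k] A) (c : A) :
    lTensor X (T2map k A) ((TensorProduct.assoc k X A A) (w ⊗ₜ[k] c))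
      = ((1 : X) ⊗ₜ[k] (c ⊗ₜ[k] (1 : A))) *
        lTensor X (Coalgebra.comul (R := k) (A := A)) w := by
  induction w using TensorProduct.induction_on with
  | zero => simp only [zero_tmul, map_zero, mul_zero]
  | tmul u b =>
      simp only [assoc_tmul, lTensor_tmul, T2map_tmul,
        Algebra.TensorProduct.tmul_mul_tmul, one_mul]
  | add x y hx hy => simp only [add_tmul, map_add, hx, hy, mul_add]

lemma comul_one' : (Coalgebra.comul (R := k) (A := A)) 1 = (1:A) ⊗ₜ[k] (1:A) := by
  have := map_one (Bialgebra.comulAlgHom k A)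
  rw [Bialgebra.comulAlgHom_apply] at this
  rw [this, Algebra.TensorProduct.one_def]

lemma PhiMap_tmul (G : GaloisContext k A X) (w : X ⊗[k] A) (y : X) :
    PhiMapG G (w ⊗ₜ[k] y)
      = lTensor X ((TensorProduct.mk k A A).flip 1) w *
        lTensor X (Coalgebra.comul (R := k) (A := A)) (G.α y) := by
  induction w using TensorProduct.induction_on with
  | zero => simp only [zero_tmul, map_zero, zero_mul]
  | tmul z c =>
      have h1 : PhiMapG G ((z ⊗ₜ[k] c) ⊗ₜ[k] y)
          = lTensor X (T2map k A) ((TensorProduct.assoc k X A A) ((G.V (z ⊗ₜ[k] y)) ⊗ₜ[k] c)) := by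
        simp [PhiMapG, QeG, congr_tmul]
      rw [h1, C0, V_tmul, lT_comul_mul]
      have h2 : lTensor X (Coalgebra.comul (R := k) (A := A)) (z ⊗ₜ[k] (1:A))
          = z ⊗ₜ[k] ((1:A) ⊗ₜ[k] (1:A)) := by
        rw [lTensor_tmul, comul_one']
      rw [h2, ← mul_assoc]
      simp [Algebra.TensorProduct.tmul_mul_tmul]
  | add x y hx hy => simp only [add_tmul, map_add, hx, hy, add_mul]

lemma PhiMap_rT_alpha_beta (G : GaloisContext k A X) (a : A) :
    PhiMapG G (rTensor X G.α.toLinearMap (G.β a))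
      = (1 : X) ⊗ₜ[k] ((1 : A) ⊗ₜ[k] a) := by
  have claim1 : ∀ w : X ⊗[k] A,
      (TensorProduct.assoc k X A A) (w ⊗ₜ[k] (1 : A))
        = lTensor X ((TensorProduct.mk k A A).flip 1) w := by
    intro w
    induction w using TensorProduct.induction_on with
    | zero => simp only [zero_tmul, map_zero]
    | tmul z c => simp [assoc_tmul]
    | add x y hx hy => simp only [add_tmul, map_add, hx, hy]
  have key : ∀ u : X ⊗[k] X,
      PhiMapG G (rTensor X G.α.toLinearMap u)
        = (TensorProduct.assoc k X A A) (rTensor A G.α.toLinearMap (G.V u)) := by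
    intro u
    induction u using TensorProduct.induction_on with
    | zero => simp
    | tmul x y =>
        rw [rTensor_tmul, PhiMap_tmul, V_tmul, rT_alpha_mul, rTensor_tmul, assoc_mul,
          claim1, G.coassoc y]
    | add x y hx hy => simp [hx, hy]
  rw [key, V_beta]
  have : rTensor A G.α.toLinearMap ((1:X) ⊗ₜ[k] a) = ((1:X) ⊗ₜ[k] (1:A)) ⊗ₜ[k] a := by
    rw [rTensor_tmul]
    simp only [AlgHom.toLinearMap_apply, map_one, Algebra.TensorProduct.one_def]
  rw [this, assoc_tmul]

lemma PhiMap_Rmap (G : GaloisContext k A X) (a : A) :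
    PhiMapG G (RmapG G (Coalgebra.comul a)) = (1 : X) ⊗ₜ[k] ((1 : A) ⊗ₜ[k] a) := by
  have E11 : ∀ (u : X ⊗[k] X) (b' : A),
      (swap23 X A X) (rTensor X (TensorProduct.comm k A X).toLinearMap
        ((TensorProduct.assoc k A X X).symm (b' ⊗ₜ[k] u))) = u ⊗ₜ[k] b' := by
    intro u b'
    induction u using TensorProduct.induction_on with
    | zero => simp
    | tmul x y => simp [assoc_symm_tmul]
    | add x y hx hy => simp [tmul_add, add_tmul, hx, hy]
  have key : ∀ t : A ⊗[k] A,
      PhiMapG G (RmapG G t)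
        = (1 : X) ⊗ₜ[k] (T2map k A
            ((TensorProduct.comm k A A) (rTensor A (HopfAlgebra.antipode k) t))) := by
    intro t
    induction t using TensorProduct.induction_on with
    | zero => simp
    | tmul b c =>
        have h1 : RmapG G (b ⊗ₜ[k] c)
            = rTensor X (TensorProduct.comm k A X).toLinearMap
                ((TensorProduct.assoc k A X X).symm
                  ((HopfAlgebra.antipode (R := k) b) ⊗ₜ[k] (G.β c))) := by
          simp [RmapG]
        rw [h1]
        have h2 : PhiMapG G (rTensor X (TensorProduct.comm k A X).toLinearMap
            ((TensorProduct.assoc k A X X).symm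
              ((HopfAlgebra.antipode (R := k) b) ⊗ₜ[k] (G.β c))))
            = lTensor X (T2map k A)
            ((TensorProduct.assoc k X A A)
              ((TensorProduct.congr G.V (LinearEquiv.refl k A))
                ((G.β c) ⊗ₜ[k] (HopfAlgebra.antipode (R := k) b)))) := by
          simp only [PhiMapG, QeG, LinearMap.coe_comp, Function.comp_apply,
            LinearEquiv.coe_coe, LinearEquiv.trans_apply, E11]
        rw [h2, congr_tmul, V_beta]
        simp [assoc_tmul]
    | add x y hx hy => simp [hx, hy, tmul_add]
  rw [key, H3_comul]

lemma beta_coassoc_antipode (G : GaloisContext k A X) (a : A) :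
    rTensor X G.α.toLinearMap (G.β a) = RmapG G (Coalgebra.comul a) := by
  have h := (PhiMap_rT_alpha_beta G a).trans (PhiMap_Rmap G a).symm
  have cancel : ∀ t : X ⊗[k] (A ⊗[k] A),
      lTensor X (Umap k A) (lTensor X (T2map k A) t) = t := by
    intro t
    rw [← LinearMap.lTensor_comp_apply]
    have hUT : Umap k A ∘ₗ T2map k A = LinearMap.id := LinearMap.ext (Umap_T2map)
    rw [hUT, lTensor_id, LinearMap.id_apply]
  have h2 : (QeG G) (rTensor X G.α.toLinearMap (G.β a))
      = (QeG G) (RmapG G (Coalgebra.comul a)) := by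
    have h3 := congrArg (lTensor X (Umap k A)) h
    simpa only [PhiMapG, LinearMap.coe_comp, Function.comp_apply, LinearEquiv.coe_coe,
      cancel] using h3
  exact (QeG G).injective h2

end Galois

section SmallFun

variable {M N : Type*} [AddCommGroup M] [Module k M] [AddCommGroup N] [Module k N]

lemma applyFst_zero_fun (w : M ⊗[k] N) : applyFst k (0 : M →ₗ[k] k) w = 0 := by
  simp [applyFst]

lemma applyFst_add_fun (f g : M →ₗ[k] k) (w : M ⊗[k] N) :
    applyFst k (f + g) w = applyFst k f w + applyFst k g w := by
  induction w using TensorProduct.induction_on with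
  | zero => simp
  | tmul m n => simp [add_smul]
  | add x y hx hy =>
      rw [map_add, map_add, map_add, hx, hy]
      abel

lemma applyFst_smul_fun (c : k) (f : M →ₗ[k] k) (w : M ⊗[k] N) :
    applyFst k (c • f) w = c • applyFst k f w := by
  induction w using TensorProduct.induction_on with
  | zero => simp
  | tmul m n => simp [smul_smul]
  | add x y hx hy => simp [hx, hy]

end SmallFun

section Analytic

variable {A X : Type*} [Ring A] [HopfAlgebra k A] [Ring X] [Algebra k X]

lemma L2_id (G : GaloisContext k A X) (φX : X →ₗ[k] k)
    (hφX : ∀ x : X, applySnd k G.φ (G.α x) = φX x • (1 : X)) (a : A) (x : X) :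
    applySnd k (φX ∘ₗ mulRight k x) (G.β a)
      = applySnd k (G.φ ∘ₗ mulLeft k a) (G.α x) := by
  have h1 : applySnd k (φX ∘ₗ mulRight k x) (G.β a)
      = applySnd k φX (TensorProduct.map LinearMap.id (mulRight k x) (G.β a)) :=
    (applySnd_map_id φX (mulRight k x) (G.β a)).symm
  rw [h1, beta_mulRight, ← applySnd_phi_V G φX hφX, LinearEquiv.apply_symm_apply,
    applySnd_tmul_mul, one_mul]

lemma phiX_faithful_r (G : GaloisContext k A X) (φX : X →ₗ[k] k)
    (hφX : ∀ x : X, applySnd k G.φ (G.α x) = φX x • (1 : X)) (u : X)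
    (h : ∀ z : X, φX (z * u) = 0) : u = 0 := by
  have hfun : φX ∘ₗ mulRight k u = 0 := LinearMap.ext fun z => by simpa using h z
  have h1 : ∀ a : A, applySnd k (G.φ ∘ₗ mulLeft k a) (G.α u) = 0 := by
    intro a
    rw [← L2_id G φX hφX a u, hfun, applySnd_zero_fun]
  have h2 : ∀ ω : Module.Dual k X, applyFst k ω (G.α u) = 0 := by
    intro ω
    apply G.φ_faithful_right
    intro b
    have h3 := applyFst_comm_applySnd ω (G.φ ∘ₗ mulLeft k b) (G.α u)
    rw [h1 b, map_zero] at h3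
    simpa using h3.symm
  have h4 : (G.α u : X ⊗[k] A) = 0 := sep_all_dual (G.α u) h2
  have h5 := G.counit_id u
  rw [h4, map_zero] at h5
  exact h5.symm

lemma psiX_faithful (G : GaloisContext k A X) (φX : X →ₗ[k] k)
    (hφX : ∀ x : X, applySnd k G.φ (G.α x) = φX x • (1 : X))
    (ψX : X →ₗ[k] k) (δX : Xˣ) (hδX : ∀ x : X, φX (x * δX) = ψX x) (u : X)
    (h : ∀ y : X, ψX (y * u) = 0) : u = 0 := by
  have h1 : ∀ z : X, φX (z * (u * (δX : X))) = 0 := by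
    intro z
    rw [← mul_assoc, hδX (z * u)]
    exact h z
  have h2 : u * (δX : X) = 0 := phiX_faithful_r G φX hφX _ h1
  calc u = u * (δX : X) * ((δX⁻¹ : Xˣ) : X) := (Units.mul_inv_cancel_right u δX).symm
  _ = 0 := by rw [h2, zero_mul]

lemma M_id (G : GaloisContext k A X) (φX : X →ₗ[k] k)
    (hφX : ∀ x : X, applySnd k G.φ (G.α x) = φX x • (1 : X)) (z : X) (a : A) :
    applyFst k (φX ∘ₗ mulLeft k z) (G.β a)
      = applySnd k (G.φ ∘ₗ mulRight k (HopfAlgebra.antipode (R := k) a)) (G.α z) := by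
  set innerz : A →ₗ[k] X :=
    applySnd k G.φ ∘ₗ mulLeft k (G.α z) ∘ₗ TensorProduct.mk k X A 1 with hinner
  have hinner_eq : ∀ b : A, innerz b = applySnd k (G.φ ∘ₗ mulRight k b) (G.α z) := by
    intro b
    simp only [hinner, LinearMap.coe_comp, Function.comp_apply, mk_apply, mulLeft_apply]
    rw [applySnd_mul_tmul, mul_one]
  have M0 : ∀ u : X ⊗[k] X,
      applyFst k (φX ∘ₗ mulLeft k z) u
        = mul' k X (rTensor X (applySnd k G.φ)
            (rTensor X (mulLeft k (G.α z)) (rTensor X G.α.toLinearMap u))) := by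
    intro u
    induction u using TensorProduct.induction_on with
    | zero => simp
    | tmul p q =>
        rw [rTensor_tmul, rTensor_tmul, rTensor_tmul]
        have hmm : (mulLeft k (G.α z)) (G.α.toLinearMap p) = G.α (z * p) := by
          simp [map_mul]
        rw [hmm, hφX (z * p), mul'_apply, smul_mul_assoc, one_mul, applyFst_tmul]
        simp
    | add x y hx hy => simp [hx, hy]
  rw [M0 (G.β a), beta_coassoc_antipode]
  have M1 : ∀ (u : X ⊗[k] X) (b' : A),
      mul' k X (rTensor X (applySnd k G.φ) (rTensor X (mulLeft k (G.α z))
        (rTensor X (TensorProduct.comm k A X).toLinearMap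
          ((TensorProduct.assoc k A X X).symm (b' ⊗ₜ[k] u)))))
        = innerz b' * mul' k X u := by
    intro u b'
    induction u using TensorProduct.induction_on with
    | zero => simp
    | tmul x y =>
        simp only [assoc_symm_tmul, rTensor_tmul, LinearEquiv.coe_coe, comm_tmul,
          mulLeft_apply, mul'_apply]
        rw [applySnd_mul_tmul, ← hinner_eq b', mul_assoc]
    | add u v hu hv => simp [tmul_add, hu, hv, mul_add]
  have key : ∀ t : A ⊗[k] A,
      mul' k X (rTensor X (applySnd k G.φ)
          (rTensor X (mulLeft k (G.α z)) (RmapG G t)))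
        = innerz (HopfAlgebra.antipode (R := k)
            (applySnd k (Coalgebra.counit (R := k)) t)) := by
    intro t
    induction t using TensorProduct.induction_on with
    | zero => simp
    | tmul b c =>
        have h1 : RmapG G (b ⊗ₜ[k] c)
            = rTensor X (TensorProduct.comm k A X).toLinearMap
                ((TensorProduct.assoc k A X X).symm
                  ((HopfAlgebra.antipode (R := k) b) ⊗ₜ[k] (G.β c))) := by
          simp [RmapG]
        rw [h1, M1 (G.β c) (HopfAlgebra.antipode (R := k) b), mul_beta, applySnd_tmul]
        rw [map_smul, map_smul, mul_smul_comm, mul_one]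
    | add x y hx hy => simp [hx, hy]
  rw [key (Coalgebra.comul a), applySnd_counit_comul]
  exact hinner_eq (HopfAlgebra.antipode (R := k) a)

lemma Q3_id (G : GaloisContext k A X) (z : X) (u : X ⊗[k] X) :
    rTensor X G.α.toLinearMap (TensorProduct.map (mulLeft k z) LinearMap.id u)
      = rTensor X (mulLeft k (G.α z)) (rTensor X G.α.toLinearMap u) := by
  induction u using TensorProduct.induction_on with
  | zero => simp
  | tmul p q => simp [map_mul]
  | add x y hx hy => simp [hx, hy]

lemma SIS (G : GaloisContext k A X) (ψX : X →ₗ[k] k)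
    (hψX : ∀ x : X, applyFst k ψX (G.α x) = ψX x • (1 : A)) (x y : X) :
    applyFst k (ψX ∘ₗ mulRight k y) (G.α x)
      = HopfAlgebra.antipode (R := k) (applyFst k ψX (G.V (x ⊗ₜ[k] y))) := by
  set SL : (X ⊗[k] A) ⊗[k] X →ₗ[k] A :=
    applyFst k (ψX ∘ₗ mul' k X) ∘ₗ (swap23 X A X).toLinearMap with hSL
  have E10 : ∀ (w : X ⊗[k] A) (y' : X),
      SL (w ⊗ₜ[k] y') = applyFst k (ψX ∘ₗ mulRight k y') w := by
    intro w y'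
    induction w using TensorProduct.induction_on with
    | zero => simp [hSL]
    | tmul p q => simp [hSL]
    | add u v hu hv =>
        rw [add_tmul, map_add, map_add, hu, hv]
  have main : ∀ (z : X) (a : A),
      SL (rTensor X G.α.toLinearMap
        (TensorProduct.map (mulLeft k z) LinearMap.id (G.β a)))
        = ψX z • HopfAlgebra.antipode (R := k) a := by
    intro z a
    rw [Q3_id, beta_coassoc_antipode]
    have SIa : ∀ (u : X ⊗[k] X) (b' : A),
        SL (rTensor X (mulLeft k (G.α z))
          (rTensor X (TensorProduct.comm k A X).toLinearMap
            ((TensorProduct.assoc k A X X).symm (b' ⊗ₜ[k] u))))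
          = applyFst k (ψX ∘ₗ mulRight k (mul' k X u)) (G.α z) * b' := by
      intro u b'
      induction u using TensorProduct.induction_on with
      | zero =>
          have : ψX ∘ₗ mulRight k (mul' k X (0 : X ⊗[k] X)) = 0 := by
            ext v
            simp
          rw [this, applyFst_zero_fun]
          simp
      | tmul x' y' =>
          simp only [assoc_symm_tmul, rTensor_tmul, LinearEquiv.coe_coe, comm_tmul,
            mulLeft_apply]
          rw [E10, applyFst_mul_tmul]
          have hfun : (ψX ∘ₗ mulRight k y') ∘ₗ mulRight k x'
              = ψX ∘ₗ mulRight k (x' * y') := by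
            ext v
            simp [mul_assoc]
          rw [hfun, mul'_apply]
      | add u v hu hv =>
          have hsplit : ψX ∘ₗ mulRight k (mul' k X u + mul' k X v)
              = ψX ∘ₗ mulRight k (mul' k X u) + ψX ∘ₗ mulRight k (mul' k X v) := by
            ext w
            simp [mul_add]
          simp only [tmul_add, map_add]
          rw [hu, hv, hsplit, applyFst_add_fun, add_mul]
    have hstep : ∀ t : A ⊗[k] A,
        SL (rTensor X (mulLeft k (G.α z)) (RmapG G t))
          = applyFst k ψX (G.α z) *
            HopfAlgebra.antipode (R := k) (applySnd k (Coalgebra.counit (R := k)) t) := by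
      intro t
      induction t using TensorProduct.induction_on with
      | zero => simp
      | tmul b c =>
          have h1 : RmapG G (b ⊗ₜ[k] c)
              = rTensor X (TensorProduct.comm k A X).toLinearMap
                  ((TensorProduct.assoc k A X X).symm
                    ((HopfAlgebra.antipode (R := k) b) ⊗ₜ[k] (G.β c))) := by
            simp [RmapG]
          rw [h1, SIa (G.β c) (HopfAlgebra.antipode (R := k) b), mul_beta]
          have hfun : ψX ∘ₗ mulRight k ((Coalgebra.counit (R := k) c) • (1 : X))
              = (Coalgebra.counit (R := k) c) • ψX := by
            ext v
            simp [mul_smul_comm]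
          rw [hfun, applyFst_smul_fun, applySnd_tmul, map_smul]
          simp only [smul_mul_assoc, mul_smul_comm]
      | add s t hs ht => simp [hs, ht, mul_add]
    rw [hstep (Coalgebra.comul a), applySnd_counit_comul, hψX, smul_mul_assoc, one_mul]
  have hmap : SL ∘ₗ rTensor X G.α.toLinearMap ∘ₗ G.V.symm.toLinearMap
      = (HopfAlgebra.antipode (R := k) (A := A)) ∘ₗ applyFst k ψX := by
    apply TensorProduct.ext'
    intro z a
    simp only [LinearMap.coe_comp, Function.comp_apply, LinearEquiv.coe_coe]
    rw [V_symm_tmul, main z a, applyFst_tmul, map_smul]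
  have hfin := LinearMap.congr_fun hmap (G.V (x ⊗ₜ[k] y))
  simp only [LinearMap.coe_comp, Function.comp_apply, LinearEquiv.coe_coe,
    LinearEquiv.symm_apply_apply] at hfin
  rw [rTensor_tmul] at hfin
  rw [← hfin, E10 (G.α.toLinearMap x) y]
  rfl

lemma Q1_id (G : GaloisContext k A X) (ψX : X →ₗ[k] k) (y u : X) :
    applyFst k (ψX ∘ₗ mulLeft k y) (G.α u) = applyFst k ψX (G.V (y ⊗ₜ[k] u)) := by
  rw [V_tmul, applyFst_tmul_mul, one_mul]

lemma final_ii (G : GaloisContext k A X) (φX : X →ₗ[k] k)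
    (hφX : ∀ x : X, applySnd k G.φ (G.α x) = φX x • (1 : X))
    (σ : A ≃ₐ[k] A) (hσ : ∀ a b : A, G.φ (a * b) = G.φ (b * σ a))
    (σX : X ≃ₐ[k] X) (hσX : ∀ x y : X, φX (y * σX x) = φX (x * y))
    (Sinv : A →ₗ[k] A)
    (hSinv₂ : ∀ a : A, HopfAlgebra.antipode (R := k) (A := A) (Sinv a) = a) (a : A) :
    G.β (Sinv (σ a))
      = TensorProduct.map σX.toLinearMap LinearMap.id
          (TensorProduct.comm k X X (G.β a)) := by
  have hsep : ∀ u : X ⊗[k] X,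
      (∀ z : X, applyFst k (φX ∘ₗ mulLeft k z) u = 0) → u = 0 := by
    intro u hu
    refine sep_fst_fam (fun z : X => φX ∘ₗ mulLeft k z) ?_ u hu
    intro v hv
    exact phiX_faithful_r G φX hφX v (fun z => by simpa using hv z)
  rw [← sub_eq_zero]
  apply hsep
  intro z
  rw [map_sub, sub_eq_zero, M_id G φX hφX z (Sinv (σ a)), hSinv₂]
  have hR : applyFst k (φX ∘ₗ mulLeft k z)
      (TensorProduct.map σX.toLinearMap LinearMap.id (TensorProduct.comm k X X (G.β a)))
      = applySnd k ((φX ∘ₗ mulLeft k z) ∘ₗ σX.toLinearMap) (G.β a) := by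
    rw [applyFst_map, applyFst_comm]
    rfl
  rw [hR]
  have hfun : (φX ∘ₗ mulLeft k z) ∘ₗ σX.toLinearMap = φX ∘ₗ mulRight k z := by
    ext v
    simpa using hσX v z
  rw [hfun, L2_id G φX hφX a z]
  have hfe : G.φ ∘ₗ mulRight k (σ a) = G.φ ∘ₗ mulLeft k a := by
    ext v
    simpa using (hσ a v).symm
  rw [hfe]

lemma final_i (G : GaloisContext k A X) (φX : X →ₗ[k] k)
    (hφX : ∀ x : X, applySnd k G.φ (G.α x) = φX x • (1 : X))
    (ψX : X →ₗ[k] k)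
    (hψX : ∀ x : X, applyFst k ψX (G.α x) = ψX x • (1 : A))
    (δX : Xˣ) (hδX : ∀ x : X, φX (x * δX) = ψX x)
    (σX : X ≃ₐ[k] X) (hσX : ∀ x y : X, φX (y * σX x) = φX (x * y))
    (Sinv : A →ₗ[k] A)
    (hSinv₁ : ∀ a : A, Sinv (HopfAlgebra.antipode (R := k) (A := A) a) = a)
    (x : X) :
    G.α ((δX : X) * σX x * ((δX⁻¹ : Xˣ) : X))
      = TensorProduct.map
          (mulLeft k (δX : X) ∘ₗ mulRight k ((δX⁻¹ : Xˣ) : X) ∘ₗ σX.toLinearMap)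
          (Sinv ∘ₗ Sinv) (G.α x) := by
  have Q2 : ∀ v w : X, ψX (v * ((δX : X) * σX w * ((δX⁻¹ : Xˣ) : X))) = ψX (w * v) := by
    intro v w
    rw [← hδX (v * ((δX : X) * σX w * ((δX⁻¹ : Xˣ) : X)))]
    have hmm : v * ((δX : X) * σX w * ((δX⁻¹ : Xˣ) : X)) * (δX : X)
        = (v * (δX : X)) * σX w := by
      rw [mul_assoc, Units.inv_mul_cancel_right, ← mul_assoc]
    rw [hmm, hσX w (v * (δX : X)), ← mul_assoc, hδX (w * v)]
  have hsep : ∀ u : X ⊗[k] A,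
      (∀ y : X, applyFst k (ψX ∘ₗ mulLeft k y) u = 0) → u = 0 := by
    intro u hu
    refine sep_fst_fam (fun y : X => ψX ∘ₗ mulLeft k y) ?_ u hu
    intro v hv
    exact psiX_faithful G φX hφX ψX δX hδX v (fun y => by simpa using hv y)
  rw [← sub_eq_zero]
  apply hsep
  intro y
  rw [map_sub, sub_eq_zero]
  -- left slice
  have hL : applyFst k (ψX ∘ₗ mulLeft k y)
      (G.α ((δX : X) * σX x * ((δX⁻¹ : Xˣ) : X)))
      = Sinv (applyFst k ψX (G.V (x ⊗ₜ[k] y))) := by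
    rw [Q1_id]
    have h1 := SIS G ψX hψX y ((δX : X) * σX x * ((δX⁻¹ : Xˣ) : X))
    have h2 := congrArg Sinv h1
    rw [hSinv₁] at h2
    rw [← h2]
    have hfun : ψX ∘ₗ mulRight k ((δX : X) * σX x * ((δX⁻¹ : Xˣ) : X))
        = ψX ∘ₗ mulLeft k x := by
      ext v
      have h := Q2 v x
      simp only [LinearMap.coe_comp, Function.comp_apply, mulRight_apply, mulLeft_apply]
      simp only [mul_assoc] at h ⊢
      exact h
    rw [hfun, Q1_id]
  -- right slice
  have hRfun : (ψX ∘ₗ mulLeft k y) ∘ₗ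
      (mulLeft k (δX : X) ∘ₗ mulRight k ((δX⁻¹ : Xˣ) : X) ∘ₗ σX.toLinearMap)
      = ψX ∘ₗ mulRight k y := by
    ext v
    have h := Q2 y v
    simp only [LinearMap.coe_comp, Function.comp_apply, mulLeft_apply, mulRight_apply,
      AlgEquiv.toLinearMap_apply]
    simp only [mul_assoc] at h ⊢
    exact h
  have hR : applyFst k (ψX ∘ₗ mulLeft k y)
      (TensorProduct.map
        (mulLeft k (δX : X) ∘ₗ mulRight k ((δX⁻¹ : Xˣ) : X) ∘ₗ σX.toLinearMap)
        (Sinv ∘ₗ Sinv) (G.α x))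
      = Sinv (applyFst k ψX (G.V (x ⊗ₜ[k] y))) := by
    rw [applyFst_map, hRfun, SIS G ψX hψX x y]
    simp only [LinearMap.coe_comp, Function.comp_apply]
    rw [hSinv₁]
  rw [hL, hR]

end Analytic

end Aux

theorem galois_object_sigma_prime_formulas
    {k : Type*} [Field k] {A X : Type*} [Ring A] [HopfAlgebra k A]
    [Ring X] [Algebra k X] [Nontrivial X]
    (G : GaloisContext k A X)
    (φX : X →ₗ[k] k)
    (hφX : ∀ x : X, applySnd k G.φ (G.α x) = φX x • (1 : X))
    (ψX : X →ₗ[k] k) (hψX_ne : ψX ≠ 0)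
    (hψX : ∀ x : X, applyFst k ψX (G.α x) = ψX x • (1 : A))
    (δX : Xˣ) (hδX : ∀ x : X, φX (x * δX) = ψX x)
    (σ : A ≃ₐ[k] A) (hσ : ∀ a b : A, G.φ (a * b) = G.φ (b * σ a))
    (σX : X ≃ₐ[k] X) (hσX : ∀ x y : X, φX (y * σX x) = φX (x * y))
    (Sinv : A →ₗ[k] A)
    (hSinv₁ : ∀ a : A, Sinv (HopfAlgebra.antipode (R := k) (A := A) a) = a)
    (hSinv₂ : ∀ a : A, HopfAlgebra.antipode (R := k) (A := A) (Sinv a) = a) :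
    (∀ x : X,
      G.α (↑δX * σX x * ↑δX⁻¹)
        = TensorProduct.map
            (LinearMap.mulLeft k (↑δX : X) ∘ₗ LinearMap.mulRight k (↑δX⁻¹ : X)
              ∘ₗ σX.toLinearMap)
            (Sinv ∘ₗ Sinv) (G.α x)) ∧
    (∀ a : A,
      G.β (Sinv (σ a))
        = TensorProduct.map σX.toLinearMap LinearMap.id
            (TensorProduct.comm k X X (G.β a))) := by
  constructor
  · intro x
    exact final_i G φX hφX ψX hψX δX hδX σX hσX Sinv hSinv₁ x
  · intro a
    exact final_ii G φX hφX σ hσ σX hσX Sinv hSinv₂ a
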